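/- arXiv:1608.02242 — 2 statements merged into one kernel-verified Lean document; each statement's English description precedes it below -/
import Mathlib

section
/- For every w ∈ F_S and every η ∈ Z one has τ̄(w)(η) = σ̄(π(w))(η). Consequently, if w, w′ ∈ F_S satisfy π(w) = π(w′), then τ̄(w) and τ̄(w′) agree on Z. -/
open scoped BigOperators symmDiff Classical

universe u v

/-- A sofic approximation of a group `Γ` generated by a finite symmetric set `S`. -/
structure SoficApprox (Γ : Type u) [Group Γ] (S : Finset Γ) where
  F : ℕ → Finset Γ
  F_mono : Monotone F
  F_one : ∀ i, (1 : Γ) ∈ F i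
  F_exhausts : ∀ g : Γ, ∃ i, g ∈ F i
  eps : ℕ → ℝ
  eps_pos : ∀ i, 0 < eps i
  eps_lim : Filter.Tendsto eps Filter.atTop (nhds 0)
  X : ℕ → Type
  finX : ∀ i, Finite (X i)
  neX : ∀ i, Nonempty (X i)
  sigma : (i : ℕ) → Γ → Equiv.Perm (X i)
  Y : (i : ℕ) → Set (X i)
  Y_large : ∀ i, (1 - eps i) * (Nat.card (X i) : ℝ) ≤ ((Y i).ncard : ℝ)
  sigma_mul : ∀ i, ∀ g ∈ F i, ∀ h ∈ F i, ∀ y ∈ Y i, sigma i g (sigma i h y) = sigma i (g * h) y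
  sigma_free : ∀ i, ∀ g ∈ F i, g ≠ 1 → ∀ y ∈ Y i, sigma i g y ≠ y

namespace SoficApprox

variable {Γ : Type u} [Group Γ] {S : Finset Γ}

/-- The total space (space of graphs) `X = ⨆ i, X i`. -/
abbrev Total (A : SoficApprox Γ S) : Type := Σ i, A.X i

/-- The bijection `σ(g)` of the total space acting as `σ_i(g)` on each `X i`. -/
def perm (A : SoficApprox Γ S) (g : Γ) : Equiv.Perm A.Total :=
  Equiv.sigmaCongrRight fun i => A.sigma i g

/-- The continuous extension `σ̄(g)` of `σ(g)` to the Stone–Čech compactification. -/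
def permBar (A : SoficApprox Γ S) (g : Γ) : Ultrafilter A.Total → Ultrafilter A.Total :=
  Ultrafilter.map (A.perm g)

/-- The union `Y = ⨆ i, Y i` inside the total space. -/
def Ytot (A : SoficApprox Γ S) : Set A.Total := {p | p.2 ∈ A.Y p.1}

/-- `∂Y`: free ultrafilters containing `Y`. -/
def bdY (A : SoficApprox Γ S) : Set (Ultrafilter A.Total) :=
  {η | (∀ p : A.Total, η ≠ pure p) ∧ A.Ytot ∈ η}

/-- The core `Z = ⋂_{g ∈ Γ} σ̄(g)''(∂Y)` of the sofic boundary. -/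
def core (A : SoficApprox Γ S) : Set (Ultrafilter A.Total) :=
  ⋂ g : Γ, A.permBar g '' A.bdY

/-- The `S`-labelled graph structure on `X i`, with edges `{x, σ_i(s)(x)}` for `s ∈ S`. -/
def graph (A : SoficApprox Γ S) (i : ℕ) : SimpleGraph (A.X i) where
  Adj x y := x ≠ y ∧ ∃ s ∈ S, A.sigma i s x = y ∨ A.sigma i s y = x
  symm := ⟨fun x y h => ⟨h.1.symm, by obtain ⟨s, hs, h'⟩ := h.2; exact ⟨s, hs, h'.symm⟩⟩⟩
  loopless := ⟨fun x h => h.1 rfl⟩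

/-- An admissible metric on the total space: a metric restricting to the edge-path
metric on each `X i` and with distances between distinct components tending to `∞`. -/
def Admissible (A : SoficApprox Γ S) (d : A.Total → A.Total → ℝ) : Prop :=
  (∀ p q, d p q = d q p) ∧
  (∀ p q r, d p r ≤ d p q + d q r) ∧
  (∀ p q, d p q = 0 ↔ p = q) ∧
  (∀ p q, 0 ≤ d p q) ∧
  (∀ (i : ℕ) (x y : A.X i), d ⟨i, x⟩ ⟨i, y⟩ = ((A.graph i).dist x y : ℝ)) ∧
  (∀ R : ℝ, ∃ N : ℕ, ∀ i j : ℕ, i ≠ j → N ≤ i + j →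
      ∀ (x : A.X i) (y : A.X j), R < d ⟨i, x⟩ ⟨j, y⟩)

/-- The entourage `E_R` viewed inside `βX × βX`. -/
def ER (A : SoficApprox Γ S) (d : A.Total → A.Total → ℝ) (R : ℝ) :
    Set (Ultrafilter A.Total × Ultrafilter A.Total) :=
  {p | ∃ a b : A.Total, d a b ≤ R ∧ p = (pure a, pure b)}

end SoficApprox

/-- Word length of `g` with respect to the generating set `S`. -/
noncomputable def wordLength {Γ : Type u} [Group Γ] (S : Finset Γ) (g : Γ) : ℕ :=
  sInf {n | ∃ l : List Γ, (∀ x ∈ l, x ∈ S) ∧ l.length = n ∧ l.prod = g}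

/-- Word length of an element of a free group. -/
noncomputable def fgLength {α : Type v} (w : FreeGroup α) : ℕ :=
  sInf {n | ∃ l : List (α × Bool), l.length = n ∧ FreeGroup.mk l = w}

/-- The canonical homomorphism `F_S → Γ` extending the inclusion `S ↪ Γ`. -/
noncomputable def pihom {Γ : Type u} [Group Γ] (S : Finset Γ) : FreeGroup ↥S →* Γ :=
  FreeGroup.lift fun s => (s : Γ)

/-- The homomorphism `τ : F_S → Sym(X)` with `τ(s) = σ(s)` for `s ∈ S`. -/
noncomputable def SoficApprox.tau {Γ : Type u} [Group Γ] {S : Finset Γ}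
    (A : SoficApprox Γ S) : FreeGroup ↥S →* Equiv.Perm A.Total :=
  FreeGroup.lift fun s => A.perm (s : Γ)

section Aux

variable {Γ : Type u} [Group Γ] {S : Finset Γ} (A : SoficApprox Γ S)

private lemma umap_congr {α β : Type*} (ζ : Ultrafilter α) {f g : α → β}
    (h : {x | f x = g x} ∈ ζ) : Ultrafilter.map f ζ = Ultrafilter.map g ζ := by
  apply Ultrafilter.coe_injective
  simp only [Ultrafilter.coe_map]
  exact Filter.map_congr h

private lemma umap_map {α β γ : Type*} (ζ : Ultrafilter α) (f : α → β) (g : β → γ) :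
    Ultrafilter.map g (Ultrafilter.map f ζ) = Ultrafilter.map (g ∘ f) ζ := by
  apply Ultrafilter.coe_injective
  simp only [Ultrafilter.coe_map]
  exact Filter.map_map

private lemma finite_low (N : ℕ) : {p : A.Total | p.1 < N}.Finite := by
  have h : {p : A.Total | p.1 < N} ⊆ ⋃ i ∈ Finset.range N, Set.range (Sigma.mk i) := by
    rintro ⟨i, x⟩ hp
    simp only [Set.mem_iUnion]
    exact ⟨i, Finset.mem_range.2 hp, x, rfl⟩
  refine Set.Finite.subset (Set.Finite.biUnion (Finset.range N).finite_toSet ?_) h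
  intro i _
  haveI := A.finX i
  exact Set.finite_range _

private lemma high_mem {ζ : Ultrafilter A.Total} (hζ : ζ ∈ A.bdY) (N : ℕ) :
    {p : A.Total | N ≤ p.1} ∈ ζ := by
  by_contra h
  have hTc : {p : A.Total | N ≤ p.1}ᶜ ∈ ζ := Ultrafilter.compl_mem_iff_notMem.2 h
  have hfin : ({p : A.Total | N ≤ p.1}ᶜ).Finite := by
    have : {p : A.Total | N ≤ p.1}ᶜ = {p : A.Total | p.1 < N} := by
      ext p; simp [not_le]
    rw [this]; exact finite_low A N
  obtain ⟨x, _, hx⟩ := Ultrafilter.eq_pure_of_finite_mem hfin hTc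
  exact hζ.1 x hx

private lemma perm_apply (g : Γ) (i : ℕ) (x : A.X i) :
    A.perm g ⟨i, x⟩ = ⟨i, A.sigma i g x⟩ := rfl

private lemma sigma_one_apply (i : ℕ) {y : A.X i} (hy : y ∈ A.Y i) :
    A.sigma i 1 y = y := by
  have h := A.sigma_mul i 1 (A.F_one i) 1 (A.F_one i) y hy
  rw [one_mul] at h
  exact (A.sigma i 1).injective h

private lemma map_perm_one {ζ : Ultrafilter A.Total} (hζ : ζ ∈ A.bdY) :
    Ultrafilter.map (A.perm 1) ζ = ζ := by
  have h : {p : A.Total | A.perm 1 p = id p} ∈ ζ := by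
    refine Filter.mem_of_superset hζ.2 ?_
    rintro ⟨i, y⟩ hy
    show (⟨i, A.sigma i 1 y⟩ : A.Total) = ⟨i, y⟩
    rw [sigma_one_apply A i hy]
  have := umap_congr ζ h
  rw [this]
  apply Ultrafilter.coe_injective
  simp [Ultrafilter.coe_map]

private lemma map_perm_mul {ζ : Ultrafilter A.Total} (hζ : ζ ∈ A.bdY) (g h : Γ) :
    Ultrafilter.map (A.perm g) (Ultrafilter.map (A.perm h) ζ)
      = Ultrafilter.map (A.perm (g * h)) ζ := by
  obtain ⟨n, hn⟩ := A.F_exhausts g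
  obtain ⟨m, hm⟩ := A.F_exhausts h
  set N := max n m with hN
  have hgN : g ∈ A.F N := A.F_mono (le_max_left n m) hn
  have hhN : h ∈ A.F N := A.F_mono (le_max_right n m) hm
  have hset : {p : A.Total | (A.perm g ∘ A.perm h) p = A.perm (g * h) p} ∈ ζ := by
    refine Filter.mem_of_superset (Filter.inter_mem hζ.2 (high_mem A hζ N)) ?_
    rintro ⟨i, y⟩ ⟨hy, hi⟩
    show (⟨i, A.sigma i g (A.sigma i h y)⟩ : A.Total) = ⟨i, A.sigma i (g * h) y⟩
    rw [A.sigma_mul i g (A.F_mono hi hgN) h (A.F_mono hi hhN) y hy]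
  rw [umap_map, umap_congr ζ hset]

private lemma core_mem_image (η : Ultrafilter A.Total) (hη : η ∈ A.core) (k : Γ) :
    ∃ ζ ∈ A.bdY, Ultrafilter.map (A.perm k) ζ = η := by
  have := Set.mem_iInter.1 hη k
  obtain ⟨ζ, hζ, hζη⟩ := this
  exact ⟨ζ, hζ, hζη⟩

private lemma core_mul {η : Ultrafilter A.Total} (hη : η ∈ A.core) (g h : Γ) :
    Ultrafilter.map (A.perm g) (Ultrafilter.map (A.perm h) η)
      = Ultrafilter.map (A.perm (g * h)) η := by
  obtain ⟨ζ, hζ, rfl⟩ := core_mem_image A η hη 1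
  rw [map_perm_mul A hζ h 1, map_perm_mul A hζ g (h * 1),
    map_perm_mul A hζ (g * h) 1, mul_assoc]

private lemma core_invariant {η : Ultrafilter A.Total} (hη : η ∈ A.core) (g : Γ) :
    Ultrafilter.map (A.perm g) η ∈ A.core := by
  refine Set.mem_iInter.2 fun k => ?_
  obtain ⟨ζ, hζ, hζη⟩ := core_mem_image A η hη (g⁻¹ * k)
  refine ⟨ζ, hζ, ?_⟩
  show Ultrafilter.map (A.perm k) ζ = Ultrafilter.map (A.perm g) η
  rw [← hζη, map_perm_mul A hζ g (g⁻¹ * k), mul_inv_cancel_left]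

end Aux

open SoficApprox in
/-- **On the core, the free group action factors through `Γ`.**
For every word `w ∈ F_S` and every `η` in the core `Z`, `τ̄(w)(η) = σ̄(π(w))(η)`;
consequently words with the same image under `π : F_S → Γ` act identically on `Z`. -/
theorem tau_eq_permBar_pi_on_core
    {Γ : Type u} [Group Γ] {S : Finset Γ}
    (hSsymm : ∀ s ∈ S, s⁻¹ ∈ S)
    (hSgen : Subgroup.closure (S : Set Γ) = ⊤)
    (A : SoficApprox Γ S) :
    (∀ w : FreeGroup ↥S, ∀ η ∈ A.core,
        Ultrafilter.map (A.tau w) η = A.permBar (pihom S w) η) ∧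
    (∀ w w' : FreeGroup ↥S, pihom S w = pihom S w' →
        ∀ η ∈ A.core, Ultrafilter.map (A.tau w) η = Ultrafilter.map (A.tau w') η) := by
  have key : ∀ w : FreeGroup ↥S, ∀ η ∈ A.core,
      Ultrafilter.map (A.tau w) η = A.permBar (pihom S w) η := by
    intro w
    induction w using FreeGroup.induction_on with
    | C1 =>
      intro η hη
      have h1 : A.tau 1 = 1 := map_one _
      obtain ⟨ζ, hζ, rfl⟩ := core_mem_image A η hη 1
      have h2 : pihom S (1 : FreeGroup ↥S) = 1 := map_one _
      rw [h1, h2]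
      show Ultrafilter.map (⇑(1 : Equiv.Perm A.Total)) _ = A.permBar 1 _
      unfold SoficApprox.permBar
      rw [map_perm_mul A hζ 1 1, one_mul]
      apply Ultrafilter.coe_injective
      simp [Ultrafilter.coe_map]
    | of s =>
      intro η hη
      have h1 : A.tau (FreeGroup.of s) = A.perm (s : Γ) := FreeGroup.lift_apply_of
      have h2 : pihom S (FreeGroup.of s : FreeGroup ↥S) = (s : Γ) := FreeGroup.lift_apply_of
      rw [h1, h2]; rfl
    | inv_of s _ =>
      intro η hη
      have h1 : A.tau (FreeGroup.of s)⁻¹ = (A.perm (s : Γ))⁻¹ := by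
        rw [map_inv]
        congr 1
      have h2 : pihom S ((FreeGroup.of s : FreeGroup ↥S))⁻¹ = (s : Γ)⁻¹ := by
        rw [map_inv]; congr 1; exact FreeGroup.lift_apply_of
      rw [h1, h2]
      obtain ⟨ζ, hζ, rfl⟩ := core_mem_image A η hη (s : Γ)
      show Ultrafilter.map _ _ = Ultrafilter.map (A.perm ((s:Γ)⁻¹)) _
      rw [map_perm_mul A hζ ((s : Γ)⁻¹) (s : Γ), inv_mul_cancel, map_perm_one A hζ,
        umap_map]
      have : ⇑(A.perm (s : Γ))⁻¹ ∘ ⇑(A.perm (s : Γ)) = id := by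
        funext x
        simp
      rw [this]
      apply Ultrafilter.coe_injective
      simp [Ultrafilter.coe_map]
    | mul w w' ih ih' =>
      intro η hη
      have hmul : A.tau (w * w') = A.tau w * A.tau w' := map_mul _ _ _
      have hpmul : pihom S (w * w') = pihom S w * pihom S w' := map_mul _ _ _
      have hfun : ⇑(A.tau w * A.tau w') = ⇑(A.tau w) ∘ ⇑(A.tau w') := by
        funext x; rfl
      rw [hmul, hpmul, hfun, ← umap_map, ih' η hη]
      have hη' : A.permBar (pihom S w') η ∈ A.core :=
        core_invariant A hη (pihom S w')
      rw [ih _ hη']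
      show Ultrafilter.map (A.perm (pihom S w))
          (Ultrafilter.map (A.perm (pihom S w')) η)
        = Ultrafilter.map (A.perm (pihom S w * pihom S w')) η
      exact core_mul A hη _ _
  refine ⟨key, fun w w' hww' η hη => ?_⟩
  rw [key w η hη, key w' η hη, hww']
end

section
/- For every n ∈ ℕ: cl(E_n) ∩ (Z × Z) = ⋃_{g ∈ Γ, |g|_S ≤ n} {(η, σ̄(g)(η)) : η ∈ Z}, and the sets {(η, σ̄(g)(η)) : η ∈ Z} appearing in this union are pairwise disjoint for distinct g. -/
open scoped BigOperators symmDiff Classical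

universe u v

section Helpers

open SoficApprox

private lemma nat_find_eq' {p q : ℕ → Prop} [DecidablePred p] [DecidablePred q]
    (hp : ∃ n, p n) (hq : ∃ n, q n) (h : ∀ n, p n ↔ q n) : Nat.find hp = Nat.find hq :=
  le_antisymm (Nat.find_le ((h _).mpr (Nat.find_spec hq)))
    (Nat.find_le ((h _).mp (Nat.find_spec hp)))

/-- Any permutation of a finite type admits a 3-coloring such that non-fixed points
change color. -/
theorem exists_three_coloring {X : Type*} [Finite X] (π : Equiv.Perm X) :
    ∃ f : X → ℕ, (∀ x, f x < 3) ∧ ∀ x, π x ≠ x → f (π x) ≠ f x := by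
  classical
  cases isEmpty_or_nonempty X
  · exact ⟨fun _ => 0, fun x => (IsEmpty.false x).elim, fun x => (IsEmpty.false x).elim⟩
  letI := Fintype.ofFinite X
  letI : LinearOrder X :=
    LinearOrder.lift' (fun x => ((Fintype.equivFin X) x : ℕ))
      (fun a b hab => (Fintype.equivFin X).injective (Fin.val_injective hab))
  set P := orderOf π with hP
  have hPpos : 0 < P := orderOf_pos π
  have hπP : ∀ x, (π ^ P) x = x := fun x => by rw [pow_orderOf_eq_one]; rfl
  have hπPm : ∀ (q : ℕ) (x : X), (π ^ (P * q)) x = x := fun q x => by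
    rw [pow_mul, pow_orderOf_eq_one, one_pow]; rfl
  -- orbits
  set orb : X → Finset X := fun x => (Finset.range P).image (fun m => (π ^ m) x) with horb
  have orb_mem : ∀ x y, y ∈ orb x ↔ ∃ m : ℕ, (π ^ m) x = y := by
    intro x y
    constructor
    · rintro hy
      obtain ⟨m, -, rfl⟩ := Finset.mem_image.mp hy
      exact ⟨m, rfl⟩
    · rintro ⟨m, rfl⟩
      have hmod : (π ^ m) x = (π ^ (m % P)) x := by
        conv_lhs => rw [← Nat.mod_add_div m P]
        rw [pow_add, Equiv.Perm.mul_apply, hπPm]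
      rw [hmod]
      exact Finset.mem_image.mpr ⟨m % P, Finset.mem_range.mpr (Nat.mod_lt _ hPpos), rfl⟩
  have orb_ne : ∀ x, (orb x).Nonempty := fun x =>
    ⟨x, (orb_mem x x).mpr ⟨0, rfl⟩⟩
  have orb_shift : ∀ x, orb (π x) = orb x := by
    intro x
    ext y
    rw [orb_mem, orb_mem]
    constructor
    · rintro ⟨m, rfl⟩
      exact ⟨m + 1, by rw [pow_succ, Equiv.Perm.mul_apply]⟩
    · rintro ⟨m, rfl⟩
      refine ⟨m + P - 1, ?_⟩
      have h1 : (m + P - 1) + 1 = m + P := by omega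
      have : (π ^ ((m + P - 1) + 1)) x = (π ^ m) x := by
        rw [h1, pow_add, Equiv.Perm.mul_apply, hπP]
      rw [← this, pow_succ, Equiv.Perm.mul_apply]
  set r : X → X := fun x => (orb x).min' (orb_ne x) with hr
  have r_shift : ∀ x, r (π x) = r x := by
    intro x
    have h := orb_shift x
    simp only [hr]
    congr 1
  have r_mem : ∀ x, ∃ m : ℕ, (π ^ m) x = r x := fun x =>
    (orb_mem x (r x)).mp ((orb x).min'_mem (orb_ne x))
  -- existence of index j
  have hj : ∀ x : X, ∃ m : ℕ, (π ^ m) (r x) = x := by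
    intro x
    obtain ⟨m, hm⟩ := r_mem x
    refine ⟨P - m % P, ?_⟩
    rw [← hm, ← Equiv.Perm.mul_apply, ← pow_add]
    have : P - m % P + m = P * (m / P + 1) := by
      have h1 := Nat.mod_add_div m P
      have h2 : m % P < P := Nat.mod_lt _ hPpos
      rw [Nat.mul_add, Nat.mul_one]
      omega
    rw [this]
    exact hπPm _ x
  have hper : ∀ x : X, ∃ m : ℕ, 0 < m ∧ (π ^ m) x = x := fun x => ⟨P, hPpos, hπP x⟩
  set L : X → ℕ := fun x => Nat.find (hper x) with hLdef
  set j : X → ℕ := fun x => Nat.find (hj x) with hjdef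
  have hL_pos : ∀ x, 0 < L x := fun x => (Nat.find_spec (hper x)).1
  have hL_fix : ∀ x, (π ^ (L x)) x = x := fun x => (Nat.find_spec (hper x)).2
  have comm : ∀ (m : ℕ) (y : X), (π ^ m) (π y) = π ((π ^ m) y) := by
    intro m y
    rw [← Equiv.Perm.mul_apply, ← Equiv.Perm.mul_apply, ← pow_succ, ← pow_succ']
  have L_shift : ∀ x, L (π x) = L x := by
    intro x
    apply nat_find_eq'
    intro m
    rw [comm m x, Equiv.apply_eq_iff_eq]
  have L_pow : ∀ (m : ℕ) (x : X), L ((π ^ m) x) = L x := by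
    intro m
    induction m with
    | zero => intro x; rfl
    | succ k ih =>
      intro x
      rw [pow_succ', Equiv.Perm.mul_apply, L_shift, ih]
  have L_r : ∀ x, L (r x) = L x := by
    intro x
    obtain ⟨m, hm⟩ := r_mem x
    rw [← hm, L_pow]
  have hLr_fix : ∀ x, (π ^ (L x)) (r x) = r x := by
    intro x
    have := hL_fix (r x)
    rwa [L_r] at this
  have j_spec : ∀ x, (π ^ (j x)) (r x) = x := fun x => Nat.find_spec (hj x)
  have j_lt : ∀ x, j x < L x := by
    intro x
    by_contra hcon
    push_neg at hcon
    have hsum : j x - L x + L x = j x := by omega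
    have h1 : (π ^ (j x - L x)) (r x) = x := by
      calc (π ^ (j x - L x)) (r x) = (π ^ (j x - L x)) ((π ^ (L x)) (r x)) := by
            rw [hLr_fix]
        _ = (π ^ (j x - L x + L x)) (r x) := by
            rw [pow_add, Equiv.Perm.mul_apply]
        _ = x := by rw [hsum]; exact j_spec x
    have hlt : j x - L x < j x := by have := hL_pos x; omega
    exact Nat.find_min (hj x) hlt h1
  -- behavior of j under π
  have j_shift : ∀ x, (j x + 1 = L x → j (π x) = 0) ∧ (j x + 1 < L x → j (π x) = j x + 1) := by
    intro x
    have hstep : (π ^ (j x + 1)) (r x) = π x := by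
      rw [pow_succ', Equiv.Perm.mul_apply, j_spec]
    constructor
    · intro hcase
      apply Nat.find_eq_zero (hj (π x)) |>.mpr
      rw [pow_zero, r_shift]
      show r x = π x
      rw [← hstep, hcase, hLr_fix]
    · intro hcase
      apply (Nat.find_eq_iff (hj (π x))).mpr
      constructor
      · rw [r_shift]; exact hstep
      · intro m hm hme
        rw [r_shift] at hme
        -- π^m (r x) = π x = π^(j x + 1) (r x), m < j x + 1
        have hc : (π ^ (j x + 1 - m)) (r x) = r x := by
          have key : (π ^ m) ((π ^ (j x + 1 - m)) (r x)) = (π ^ m) (r x) := by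
            conv_lhs => rw [← Equiv.Perm.mul_apply, ← pow_add]
            have hsum : m + (j x + 1 - m) = j x + 1 := by omega
            rw [hsum, hstep, hme]
          exact (π ^ m).injective key
        have hLle : L (r x) ≤ j x + 1 - m := Nat.find_le ⟨by omega, hc⟩
        rw [L_r] at hLle
        omega
  -- the coloring
  refine ⟨fun x => if j x + 1 = L x ∧ L x % 2 = 1 then 2 else j x % 2, ?_, ?_⟩
  · intro x; dsimp only; split <;> omega
  · intro x hx
    have hL2 : 2 ≤ L x := by
      by_contra hcon2
      push_neg at hcon2
      have hL1 : L x = 1 := by have := hL_pos x; omega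
      have hfix := hL_fix x
      rw [hL1, pow_one] at hfix
      exact hx hfix
    have hLπ : L (π x) = L x := L_shift x
    rcases Nat.lt_or_ge (j x + 1) (L x) with hc | hc
    · have hjπ : j (π x) = j x + 1 := (j_shift x).2 hc
      dsimp only
      rw [hjπ, hLπ]
      split <;> split <;> omega
    · have hceq : j x + 1 = L x := by have := j_lt x; omega
      have hjπ : j (π x) = 0 := (j_shift x).1 hceq
      dsimp only
      rw [hjπ, hLπ]
      split <;> split <;> omega


namespace SoficApprox

variable {Γ : Type u} [Group Γ] {S : Finset Γ} (A : SoficApprox Γ S)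

lemma perm_apply (g : Γ) (i : ℕ) (x : A.X i) :
    A.perm g ⟨i, x⟩ = ⟨i, A.sigma i g x⟩ := rfl

lemma perm_inv_apply (g : Γ) (i : ℕ) (x : A.X i) :
    (A.perm g)⁻¹ ⟨i, x⟩ = ⟨i, (A.sigma i g)⁻¹ x⟩ := rfl

lemma exists_F (l : List Γ) : ∃ N, ∀ i, N ≤ i → ∀ g ∈ l, g ∈ A.F i := by
  induction l with
  | nil => exact ⟨0, by simp⟩
  | cons a t ih =>
    obtain ⟨N, hN⟩ := ih
    obtain ⟨M, hM⟩ := A.F_exhausts a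
    refine ⟨max N M, fun i hi g hg => ?_⟩
    rcases List.mem_cons.mp hg with rfl | hg
    · exact A.F_mono (le_trans (le_max_right N M) hi) hM
    · exact hN i (le_trans (le_max_left N M) hi) g hg

lemma sigma_one (i : ℕ) {y : A.X i} (hy : y ∈ A.Y i) : A.sigma i 1 y = y :=
  (A.sigma i 1).injective
    (by rw [A.sigma_mul i 1 (A.F_one i) 1 (A.F_one i) y hy, one_mul])

/-- The permutation of `X i` associated to a word in `S × Bool`. -/
def ppI (i : ℕ) (l : List (↥S × Bool)) : Equiv.Perm (A.X i) :=
  (l.map fun x => cond x.2 (A.sigma i (x.1 : Γ)) (A.sigma i (x.1 : Γ))⁻¹).prod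

/-- The permutation of the total space associated to a word in `S × Bool`. -/
def ppT (l : List (↥S × Bool)) : Equiv.Perm A.Total :=
  (l.map fun x => cond x.2 (A.perm (x.1 : Γ)) (A.perm (x.1 : Γ))⁻¹).prod

/-- The list of elements of `Γ` associated to a word in `S × Bool`. -/
def gw (S : Finset Γ) (l : List (↥S × Bool)) : List Γ :=
  l.map fun x => cond x.2 (x.1 : Γ) (x.1 : Γ)⁻¹

lemma ppI_nil (i : ℕ) : A.ppI i [] = 1 := rfl

lemma ppI_cons (i : ℕ) (a : ↥S × Bool) (t : List (↥S × Bool)) (x : A.X i) :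
    A.ppI i (a :: t) x = (cond a.2 (A.sigma i (a.1 : Γ)) (A.sigma i (a.1 : Γ))⁻¹) (A.ppI i t x) := by
  simp only [ppI, List.map_cons, List.prod_cons, Equiv.Perm.mul_apply]

lemma ppI_append (i : ℕ) (l m : List (↥S × Bool)) (x : A.X i) :
    A.ppI i (l ++ m) x = A.ppI i l (A.ppI i m x) := by
  simp only [ppI, List.map_append, List.prod_append, Equiv.Perm.mul_apply]

lemma ppT_apply (l : List (↥S × Bool)) (i : ℕ) (x : A.X i) :
    A.ppT l ⟨i, x⟩ = ⟨i, A.ppI i l x⟩ := by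
  induction l with
  | nil => rfl
  | cons a t ih =>
    have h1 : A.ppT (a :: t) ⟨i, x⟩
        = (cond a.2 (A.perm (a.1 : Γ)) (A.perm (a.1 : Γ))⁻¹) (A.ppT t ⟨i, x⟩) := by
      simp only [ppT, List.map_cons, List.prod_cons, Equiv.Perm.mul_apply]
    rw [h1, ih, ppI_cons]
    cases a.2 with
    | false => simp only [cond_false, perm_inv_apply]
    | true => simp only [cond_true, perm_apply]

lemma ppI_eq_sigma (l : List (↥S × Bool)) :
    ∃ N, ∀ i, N ≤ i → ∀ y ∈ A.Y i, A.ppI i l y = A.sigma i (gw S l).prod y := by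
  induction l with
  | nil =>
    exact ⟨0, fun i _ y hy => by
      simp only [ppI_nil, Equiv.Perm.one_apply, gw, List.map_nil, List.prod_nil]
      exact (A.sigma_one i hy).symm⟩
  | cons a t ih =>
    obtain ⟨N, hN⟩ := ih
    set s : Γ := (a.1 : Γ) with hs
    set h : Γ := (gw S t).prod with hh
    obtain ⟨M, hM⟩ := A.exists_F [s, h, s⁻¹ * h]
    refine ⟨max N M, fun i hi y hy => ?_⟩
    have hiN : N ≤ i := le_trans (le_max_left N M) hi
    have hiM : M ≤ i := le_trans (le_max_right N M) hi
    have hsF : s ∈ A.F i := hM i hiM s (by simp)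
    have hhF : h ∈ A.F i := hM i hiM h (by simp)
    have hshF : s⁻¹ * h ∈ A.F i := hM i hiM _ (by simp)
    have hgw : (gw S (a :: t)).prod = (cond a.2 s s⁻¹) * h := by
      simp only [gw, List.map_cons, List.prod_cons, hh, hs]
    rw [ppI_cons, hN i hiN y hy, hgw]
    cases a.2 with
    | true =>
      simp only [cond_true]
      exact A.sigma_mul i s hsF h hhF y hy
    | false =>
      simp only [cond_false]
      have key : A.sigma i s (A.sigma i (s⁻¹ * h) y) = A.sigma i h y := by
        rw [A.sigma_mul i s hsF (s⁻¹ * h) hshF y hy, mul_inv_cancel_left]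
      rw [← key]; exact (A.sigma i s).symm_apply_apply _

lemma dist_sigma_le (hconn : ∀ i, (A.graph i).Connected) (l : List Γ) (hl : ∀ g ∈ l, g ∈ S) :
    ∃ N, ∀ i, N ≤ i → ∀ y ∈ A.Y i,
      (A.graph i).dist y (A.sigma i l.prod y) ≤ l.length := by
  induction l with
  | nil =>
    refine ⟨0, fun i _ y hy => ?_⟩
    simp only [List.prod_nil, List.length_nil]
    rw [A.sigma_one i hy, SimpleGraph.dist_self]
  | cons a t ih =>
    obtain ⟨N, hN⟩ := ih (fun g hg => hl g (List.mem_cons_of_mem a hg))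
    obtain ⟨M, hM⟩ := A.exists_F [a, t.prod]
    refine ⟨max N M, fun i hi y hy => ?_⟩
    have hiN : N ≤ i := le_trans (le_max_left N M) hi
    have hiM : M ≤ i := le_trans (le_max_right N M) hi
    have he : A.sigma i (a :: t).prod y = A.sigma i a (A.sigma i t.prod y) := by
      rw [List.prod_cons]
      exact (A.sigma_mul i a (hM i hiM a (by simp)) t.prod (hM i hiM t.prod (by simp)) y hy).symm
    set z := A.sigma i t.prod y with hz
    have hstep : (A.graph i).dist z (A.sigma i a z) ≤ 1 := by
      by_cases hzz : z = A.sigma i a z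
      · rw [← hzz, SimpleGraph.dist_self]; omega
      · have hadj : (A.graph i).Adj z (A.sigma i a z) :=
          (show z ≠ A.sigma i a z ∧ ∃ s ∈ S, A.sigma i s z = A.sigma i a z ∨ A.sigma i s (A.sigma i a z) = z from
            ⟨hzz, a, hl a List.mem_cons_self, Or.inl rfl⟩)
        simpa using SimpleGraph.dist_le (SimpleGraph.Walk.cons hadj SimpleGraph.Walk.nil)
    calc (A.graph i).dist y (A.sigma i (a :: t).prod y)
        ≤ (A.graph i).dist y z + (A.graph i).dist z (A.sigma i (a :: t).prod y) :=
          (hconn i).dist_triangle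
      _ ≤ t.length + 1 := by
          rw [he]
          exact Nat.add_le_add (hN i hiN y hy) hstep
      _ = (a :: t).length := by simp [Nat.add_comm]

lemma walk_to_list (i : ℕ) {x y : A.X i} (p : (A.graph i).Walk x y) :
    ∃ l : List (↥S × Bool), l.length = p.length ∧ A.ppI i l x = y := by
  induction p with
  | nil => exact ⟨[], rfl, rfl⟩
  | @cons u v w hadj p ih =>
    obtain ⟨l, hlen, hl⟩ := ih
    have hadj' : u ≠ v ∧ ∃ s ∈ S, A.sigma i s u = v ∨ A.sigma i s v = u := hadj
    obtain ⟨hne, s, hs, hcase⟩ := hadj'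
    rcases hcase with h1 | h2
    · refine ⟨l ++ [(⟨s, hs⟩, true)], by simp [hlen], ?_⟩
      rw [ppI_append]
      have : A.ppI i [(⟨s, hs⟩, true)] u = v := by
        rw [ppI_cons, ppI_nil]
        simpa using h1
      rw [this, hl]
    · refine ⟨l ++ [(⟨s, hs⟩, false)], by simp [hlen], ?_⟩
      rw [ppI_append]
      have : A.ppI i [(⟨s, hs⟩, false)] u = v := by
        rw [ppI_cons, ppI_nil]
        simp only [cond_false, Equiv.Perm.one_apply]
        exact (Equiv.symm_apply_eq _).mpr h2.symm
      rw [this, hl]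

/-- Components with high index. -/
def big (N : ℕ) : Set A.Total := {p | N ≤ p.1}

lemma big_mem {η : Ultrafilter A.Total} (hfree : ∀ p, η ≠ pure p) (N : ℕ) :
    A.big N ∈ η := by
  by_contra hcon
  rw [← Ultrafilter.compl_mem_iff_notMem] at hcon
  have hfin : ((A.big N)ᶜ : Set A.Total).Finite := by
    have hsub : ((A.big N)ᶜ : Set A.Total) ⊆ ⋃ i ∈ Finset.range N, Set.range (Sigma.mk i) := by
      rintro ⟨i, x⟩ hp
      have : i < N := by simpa [big] using hp
      exact Set.mem_biUnion (Finset.mem_range.mpr this) ⟨x, rfl⟩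
    refine Set.Finite.subset (Set.Finite.biUnion (Finset.range N).finite_toSet fun i _ => ?_) hsub
    have := A.finX i
    exact Set.finite_range _
  obtain ⟨p, -, hp⟩ := Ultrafilter.eq_pure_of_finite_mem hfin hcon
  exact hfree p hp

lemma umap_congr {η : Ultrafilter A.Total} {f g : A.Total → A.Total} {s : Set A.Total}
    (hs : s ∈ η) (h : ∀ x ∈ s, f x = g x) :
    Ultrafilter.map f η = Ultrafilter.map g η :=
  Ultrafilter.coe_injective (by
    rw [Ultrafilter.coe_map, Ultrafilter.coe_map]
    exact Filter.map_congr (Filter.eventuallyEq_of_mem hs h))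

lemma good_mem {η : Ultrafilter A.Total} (hη : η ∈ A.bdY) (N : ℕ) :
    A.Ytot ∩ A.big N ∈ η :=
  Filter.inter_mem hη.2 (A.big_mem hη.1 N)

lemma permBar_one_fix {ξ : Ultrafilter A.Total} (hξ : ξ ∈ A.bdY) : A.permBar 1 ξ = ξ := by
  have h1 : Ultrafilter.map (A.perm 1) ξ = Ultrafilter.map id ξ := by
    refine A.umap_congr hξ.2 ?_
    rintro ⟨i, y⟩ hy
    rw [perm_apply, id_eq]
    exact congrArg (Sigma.mk i) (A.sigma_one i hy)
  rw [permBar, h1]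
  exact Ultrafilter.coe_injective (by rw [Ultrafilter.coe_map, Filter.map_id])

lemma permBar_mul {ξ : Ultrafilter A.Total} (hξ : ξ ∈ A.bdY) (g h : Γ) :
    A.permBar g (A.permBar h ξ) = A.permBar (g * h) ξ := by
  obtain ⟨N, hN⟩ := A.exists_F [g, h, g * h]
  unfold permBar
  rw [ξ.map_map]
  refine A.umap_congr (A.good_mem hξ N) ?_
  rintro ⟨i, y⟩ ⟨hy, hbig⟩
  have hiN : N ≤ i := hbig
  simp only [Function.comp_apply, perm_apply]
  exact congrArg (Sigma.mk i)
    (A.sigma_mul i g (hN i hiN g (by simp)) h (hN i hiN h (by simp)) y hy)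

lemma core_subset_bdY : A.core ⊆ A.bdY := by
  intro η hη
  obtain ⟨ξ, hξ, hmap⟩ := Set.mem_iInter.mp hη 1
  rw [← hmap, A.permBar_one_fix hξ]
  exact hξ

lemma core_inv (g : Γ) {η : Ultrafilter A.Total} (hη : η ∈ A.core) :
    A.permBar g η ∈ A.core := by
  rw [core, Set.mem_iInter]
  intro m
  obtain ⟨ξ, hξ, hmap⟩ := Set.mem_iInter.mp hη (g⁻¹ * m)
  refine ⟨ξ, hξ, ?_⟩
  rw [← hmap, A.permBar_mul hξ, mul_inv_cancel_left]

lemma permBar_ne {ξ : Ultrafilter A.Total} (hξ : ξ ∈ A.bdY) {k : Γ} (hk : k ≠ 1) :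
    A.permBar k ξ ≠ ξ := by
  obtain ⟨N, hN⟩ := A.exists_F [k]
  have hcol : ∀ i, ∃ f : A.X i → ℕ, (∀ x, f x < 3) ∧
      ∀ x, A.sigma i k x ≠ x → f (A.sigma i k x) ≠ f x := fun i => by
    have := A.finX i
    exact exists_three_coloring (A.sigma i k)
  choose f hf3 hfc using hcol
  set F : A.Total → ℕ := fun p => f p.1 p.2 with hF
  set G : Set A.Total := A.Ytot ∩ A.big N with hG
  have hGmem : G ∈ ξ := A.good_mem hξ N
  have hmove : ∀ p ∈ G, A.perm k p ≠ p := by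
    rintro ⟨i, y⟩ ⟨hy, hbig⟩
    rw [perm_apply]
    intro hcon
    have : A.sigma i k y = y := eq_of_heq (Sigma.mk.inj_iff.mp hcon).2
    exact A.sigma_free i k (hN i hbig k (by simp)) hk y hy this
  have hcolG : ∀ p ∈ G, F (A.perm k p) ≠ F p := by
    rintro ⟨i, y⟩ hp
    have := hmove _ hp
    rw [perm_apply] at this ⊢
    exact hfc i y (fun hcon => this (congrArg (Sigma.mk i) hcon))
  -- one color class is in ξ
  have hsplit : G = (G ∩ F ⁻¹' {0}) ∪ ((G ∩ F ⁻¹' {1}) ∪ (G ∩ F ⁻¹' {2})) := by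
    ext p
    constructor
    · intro hp
      have h3 := hf3 p.1 p.2
      have : F p = 0 ∨ F p = 1 ∨ F p = 2 := by
        have : F p < 3 := h3
        omega
      rcases this with h | h | h
      · exact Or.inl ⟨hp, h⟩
      · exact Or.inr (Or.inl ⟨hp, h⟩)
      · exact Or.inr (Or.inr ⟨hp, h⟩)
    · rintro (⟨hp, -⟩ | ⟨hp, -⟩ | ⟨hp, -⟩) <;> exact hp
  have hclass : ∃ c : ℕ, G ∩ F ⁻¹' {c} ∈ ξ := by
    have := hGmem
    rw [hsplit] at this
    rcases (Ultrafilter.union_mem_iff.mp this) with h | h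
    · exact ⟨0, h⟩
    · rcases (Ultrafilter.union_mem_iff.mp h) with h' | h'
      · exact ⟨1, h'⟩
      · exact ⟨2, h'⟩
  obtain ⟨c, hc⟩ := hclass
  intro heq
  have hpre : (A.perm k) ⁻¹' (G ∩ F ⁻¹' {c}) ∈ ξ := by
    have : G ∩ F ⁻¹' {c} ∈ A.permBar k ξ := by rw [heq]; exact hc
    exact Ultrafilter.mem_map.mp this
  obtain ⟨p, hp1, hp2⟩ := Ultrafilter.nonempty_of_mem (Filter.inter_mem hc hpre)
  exact hcolG p hp1.1 (by
    have h1 : F (A.perm k p) = c := hp2.2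
    have h2 : F p = c := hp1.2
    rw [h1, h2])

lemma closure_ER_extract {d : A.Total → A.Total → ℝ} {R : ℝ}
    {η ζ : Ultrafilter A.Total} (h : (η, ζ) ∈ closure (A.ER d R)) :
    ∀ s ∈ η, ∀ t ∈ ζ, ∃ a b : A.Total, a ∈ s ∧ b ∈ t ∧ d a b ≤ R := by
  intro s hs t ht
  have hopen : IsOpen ({u : Ultrafilter A.Total | s ∈ u} ×ˢ {v : Ultrafilter A.Total | t ∈ v}) :=
    (ultrafilter_isOpen_basic s).prod (ultrafilter_isOpen_basic t)
  have hmem : (η, ζ) ∈ ({u : Ultrafilter A.Total | s ∈ u} ×ˢ {v : Ultrafilter A.Total | t ∈ v}) :=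
    ⟨hs, ht⟩
  obtain ⟨p, hp1, hp2⟩ := (mem_closure_iff.mp h) _ hopen hmem
  obtain ⟨a, b, hab, hpe⟩ := hp2
  rw [hpe] at hp1
  exact ⟨a, b, Ultrafilter.mem_pure.mp hp1.1, Ultrafilter.mem_pure.mp hp1.2, hab⟩

lemma closure_ER_of {d : A.Total → A.Total → ℝ} {R : ℝ}
    {η ζ : Ultrafilter A.Total}
    (h : ∀ s ∈ η, ∀ t ∈ ζ, ∃ a b : A.Total, a ∈ s ∧ b ∈ t ∧ d a b ≤ R) :
    (η, ζ) ∈ closure (A.ER d R) := by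
  rw [mem_closure_iff]
  intro o ho hmem
  obtain ⟨U, V, hU, hV, hηU, hζV, hsub⟩ := isOpen_prod_iff.mp ho η ζ hmem
  obtain ⟨tU, ⟨sA, rfl⟩, hηtU, htUU⟩ :=
    ultrafilterBasis_is_basis.exists_subset_of_mem_open hηU hU
  obtain ⟨tV, ⟨sB, rfl⟩, hζtV, htVV⟩ :=
    ultrafilterBasis_is_basis.exists_subset_of_mem_open hζV hV
  obtain ⟨a, b, ha, hb, hab⟩ := h sA hηtU sB hζtV
  refine ⟨(pure a, pure b), hsub ⟨htUU (Ultrafilter.mem_pure.mpr ha),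
    htVV (Ultrafilter.mem_pure.mpr hb)⟩, a, b, hab, rfl⟩

lemma exists_word (hSsymm : ∀ s ∈ S, s⁻¹ ∈ S) (hSgen : Subgroup.closure (S : Set Γ) = ⊤)
    (g : Γ) : ∃ l : List Γ, (∀ x ∈ l, x ∈ S) ∧ l.prod = g := by
  have hg : g ∈ Subgroup.closure (S : Set Γ) := by rw [hSgen]; exact Subgroup.mem_top g
  induction hg using Subgroup.closure_induction with
  | mem x hx => exact ⟨[x], by simpa using hx, by simp⟩
  | one => exact ⟨[], by simp, rfl⟩
  | mul x y hx hy ihx ihy =>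
    obtain ⟨lx, hlx, hpx⟩ := ihx
    obtain ⟨ly, hly, hpy⟩ := ihy
    refine ⟨lx ++ ly, ?_, by rw [List.prod_append, hpx, hpy]⟩
    intro z hz
    rcases List.mem_append.mp hz with h | h
    · exact hlx z h
    · exact hly z h
  | inv x hx ih =>
    obtain ⟨lx, hlx, hpx⟩ := ih
    refine ⟨(lx.map fun z => z⁻¹).reverse, ?_, ?_⟩
    · intro z hz
      rw [List.mem_reverse, List.mem_map] at hz
      obtain ⟨w, hw, rfl⟩ := hz
      exact hSsymm w (hlx w hw)
    · rw [← List.prod_inv_reverse, hpx]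

end SoficApprox

end Helpers
open SoficApprox in
/-- **Decomposition of the entourages over the core.**
For every `n`, the part of `cl(E_n)` lying over the core decomposes as the union of the
`σ`-diagonals `{(η, σ̄(g)(η)) : η ∈ Z}` over group elements of word length at most `n`,
and these diagonals are pairwise disjoint for distinct `g`. -/
theorem entourage_core_eq_disjoint_union_sigma_diagonals
    {Γ : Type u} [Group Γ] {S : Finset Γ}
    (hSsymm : ∀ s ∈ S, s⁻¹ ∈ S)
    (hSgen : Subgroup.closure (S : Set Γ) = ⊤)
    (A : SoficApprox Γ S)
    (hconn : ∀ i, (A.graph i).Connected)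
    (d : A.Total → A.Total → ℝ) (hd : A.Admissible d)
    (n : ℕ) :
    (closure (A.ER d (n : ℝ)) ∩ (A.core ×ˢ A.core) =
      ⋃ g ∈ {g : Γ | wordLength S g ≤ n},
        {p : Ultrafilter A.Total × Ultrafilter A.Total |
          ∃ η ∈ A.core, p = (η, A.permBar g η)}) ∧
    (∀ g h : Γ, g ≠ h →
      Disjoint
        {p : Ultrafilter A.Total × Ultrafilter A.Total |
          ∃ η ∈ A.core, p = (η, A.permBar g η)}
        {p : Ultrafilter A.Total × Ultrafilter A.Total |
          ∃ η ∈ A.core, p = (η, A.permBar h η)}) := by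
  classical
  constructor
  · -- Part 1: the decomposition
    ext p
    constructor
    · rintro ⟨hcl, hcore⟩
      obtain ⟨η, ζ⟩ := p
      have hp1 : η ∈ A.core := hcore.1
      have hp2 : ζ ∈ A.core := hcore.2
      have hηb := A.core_subset_bdY hp1
      have hζb := A.core_subset_bdY hp2
      obtain ⟨N₀, hfar⟩ := hd.2.2.2.2.2 (n : ℝ)
      have hex : ∃ l : List (↥S × Bool), l.length ≤ n ∧ Ultrafilter.map (A.ppT l) η = ζ := by
        by_contra hcon
        push_neg at hcon
        set Wset : Set (List (↥S × Bool)) := {l | l.length ≤ n} with hWset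
        haveI : Finite ↥Wset := (List.finite_length_le (↥S × Bool) n).to_subtype
        have hsel : ∀ w : ↥Wset, ∃ B : Set A.Total, B ∈ ζ ∧ (A.ppT w.1) ⁻¹' B ∉ η := by
          rintro ⟨l, hl⟩
          by_contra hB
          push_neg at hB
          refine hcon l hl ?_
          have hle : (Ultrafilter.map (A.ppT l) η : Filter A.Total) ≤ (ζ : Filter A.Total) := by
            rw [Ultrafilter.coe_map]
            refine Filter.le_def.mpr fun B hBζ => ?_
            rw [Filter.mem_map]
            exact hB B hBζ
          exact Ultrafilter.coe_le_coe.mp hle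
        choose B hB1 hB2 using hsel
        have hA0 : (A.Ytot ∩ A.big N₀) ∩ ⋂ w : ↥Wset, (A.ppT w.1) ⁻¹' (B w)ᶜ ∈ η := by
          refine Filter.inter_mem (A.good_mem hηb N₀) (Filter.iInter_mem.mpr fun w => ?_)
          have hw := hB2 w
          rw [← Ultrafilter.compl_mem_iff_notMem] at hw
          rw [Set.preimage_compl]
          exact hw
        have hB0 : A.big N₀ ∩ ⋂ w : ↥Wset, B w ∈ ζ :=
          Filter.inter_mem (A.big_mem hζb.1 N₀) (Filter.iInter_mem.mpr hB1)
        obtain ⟨a, b, ha, hb, hab⟩ := A.closure_ER_extract hcl _ hA0 _ hB0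
        obtain ⟨i, x⟩ := a
        obtain ⟨j, y⟩ := b
        have hij : i = j := by
          by_contra hne
          have hNi : N₀ ≤ i := ha.1.2
          have hlt : (n : ℝ) < d ⟨i, x⟩ ⟨j, y⟩ :=
            hfar i j hne (le_trans hNi (Nat.le_add_right i j)) x y
          linarith
        subst hij
        have hdist : (A.graph i).dist x y ≤ n := by
          have hgd := hd.2.2.2.2.1 i x y
          rw [hgd] at hab
          exact_mod_cast hab
        obtain ⟨wk, hwk⟩ := (hconn i).exists_walk_length_eq_dist x y
        obtain ⟨l, hllen, hlx⟩ := A.walk_to_list i wk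
        have hlW : l ∈ Wset := by
          show l.length ≤ n
          rw [hllen, hwk]
          exact hdist
        have hbB : (⟨i, y⟩ : A.Total) ∈ B ⟨l, hlW⟩ := (Set.mem_iInter.mp hb.2) ⟨l, hlW⟩
        have haB := (Set.mem_iInter.mp ha.2) ⟨l, hlW⟩
        have hppT : (A.ppT l) ⟨i, x⟩ = ⟨i, y⟩ := by rw [A.ppT_apply, hlx]
        rw [Set.mem_preimage, hppT] at haB
        exact haB hbB
      obtain ⟨l, hln, hmap⟩ := hex
      set g : Γ := (gw S l).prod with hg
      have hentries : ∀ x ∈ gw S l, x ∈ S := by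
        intro x hx
        obtain ⟨⟨s, b⟩, hmem, rfl⟩ := List.mem_map.mp hx
        cases b
        · exact hSsymm _ s.2
        · exact s.2
      have hword : wordLength S g ≤ n := by
        refine le_trans (Nat.sInf_le ⟨gw S l, hentries, rfl, hg.symm⟩) ?_
        simpa [gw] using hln
      have hζeq : ζ = A.permBar g η := by
        rw [← hmap]
        obtain ⟨N, hN⟩ := A.ppI_eq_sigma l
        refine A.umap_congr (A.good_mem hηb N) ?_
        rintro ⟨i, y⟩ ⟨hy, hbig⟩
        rw [A.ppT_apply, A.perm_apply]
        exact congrArg (Sigma.mk i) (hN i hbig y hy)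
      refine Set.mem_iUnion₂.mpr ⟨g, hword, η, hp1, ?_⟩
      rw [hζeq]
    · intro hp
      rw [Set.mem_iUnion₂] at hp
      obtain ⟨g, hgw, η, hηc, hpe⟩ := hp
      subst hpe
      have hηb := A.core_subset_bdY hηc
      refine ⟨?_, hηc, A.core_inv g hηc⟩
      have hne : {m | ∃ l : List Γ, (∀ x ∈ l, x ∈ S) ∧ l.length = m ∧ l.prod = g}.Nonempty := by
        obtain ⟨l0, h1, h2⟩ := exists_word hSsymm hSgen g
        exact ⟨l0.length, l0, h1, rfl, h2⟩
      obtain ⟨l, hlS, hlen, hprod⟩ := Nat.sInf_mem hne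
      have hlenn : l.length ≤ n := by
        rw [hlen]
        exact hgw
      obtain ⟨N1, hdist⟩ := A.dist_sigma_le hconn l hlS
      apply A.closure_ER_of
      intro sA hsA sB hsB
      have hsB' : (A.perm g) ⁻¹' sB ∈ η := Ultrafilter.mem_map.mp hsB
      have hmem2 : (sA ∩ (A.perm g) ⁻¹' sB) ∩ (A.Ytot ∩ A.big N1) ∈ η :=
        Filter.inter_mem (Filter.inter_mem hsA hsB') (A.good_mem hηb N1)
      obtain ⟨a, ha⟩ := Ultrafilter.nonempty_of_mem hmem2
      obtain ⟨i, y⟩ := a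
      obtain ⟨⟨haA, haB⟩, haY, haN⟩ := ha
      refine ⟨⟨i, y⟩, A.perm g ⟨i, y⟩, haA, haB, ?_⟩
      rw [A.perm_apply, hd.2.2.2.2.1 i y (A.sigma i g y)]
      have hd1 : (A.graph i).dist y (A.sigma i g y) ≤ l.length := by
        have hh := hdist i haN y haY
        rw [hprod] at hh
        exact hh
      calc ((A.graph i).dist y (A.sigma i g y) : ℝ)
          ≤ (l.length : ℝ) := by exact_mod_cast hd1
        _ ≤ (n : ℝ) := by exact_mod_cast hlenn
  · -- Part 2: disjointness
    intro g k hgk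
    rw [Set.disjoint_left]
    rintro p ⟨η, hηc, hpe⟩ ⟨η', hηc', hpe'⟩
    rw [hpe'] at hpe
    have h1 : η' = η := congrArg Prod.fst hpe
    subst h1
    have h2 : A.permBar k η' = A.permBar g η' := congrArg Prod.snd hpe
    obtain ⟨ξ, hξ, hmapg⟩ := Set.mem_iInter.mp hηc g⁻¹
    have hgη : A.permBar g η' = ξ := by
      rw [← hmapg, A.permBar_mul hξ, mul_inv_cancel, A.permBar_one_fix hξ]
    have hfinal : A.permBar (k * g⁻¹) ξ = ξ := by
      rw [← A.permBar_mul hξ k g⁻¹, hmapg, h2, hgη]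
    have hk1 : k * g⁻¹ ≠ 1 := fun hcon => hgk (mul_inv_eq_one.mp hcon).symm
    exact A.permBar_ne hξ hk1 hfinal
end
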